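/- Let M be a von Neumann algebra in standard form with cyclic separating vector Ω, modular conjugation J and modular operator Δ, and let α be an E₀-semigroup on M preserving the vacuum state ⟨α_t(m)Ω, Ω⟩ = ⟨mΩ, Ω⟩ with canonical unit S_t defined by S_t mΩ = α_t(m)Ω. If S_t J = J S_t for all t, then Δ^{1/2} S_t ⊇ S_t Δ^{1/2} (i.e. S_t maps the domain of Δ^{1/2} into itself and the operators agree there). -/

import Mathlib

open Filter

theorem stmt16 {H : Type*} [NormedAddCommGroup H] [InnerProductSpace ℂ H] [CompleteSpace H]
    (M : VonNeumannAlgebra H) (Ω : H)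
    (hcyc : Dense {x : H | ∃ m ∈ M, x = m Ω})
    (hsep : ∀ m : H →L[ℂ] H, m ∈ M → m Ω = 0 → m = 0)
    (J : H →L[ℝ] H) (hJinv : ∀ x : H, J (J x) = x)
    (hJiso : ∀ x : H, ‖J x‖ = ‖x‖)
    (hJconj : ∀ x : H, J ((Complex.I : ℂ) • x) = -((Complex.I : ℂ) • J x))
    (D : H →ₗ.[ℂ] H) (hDclosed : D.IsClosed)
    (hcore : ∀ x : H, ∀ hx : x ∈ D.domain,
      ∃ (u : ℕ → H →L[ℂ] H) (hu : ∀ n, u n ∈ M) (hud : ∀ n, (u n) Ω ∈ D.domain),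
        Tendsto (fun n => (u n) Ω) atTop (nhds x) ∧
        Tendsto (fun n => D ⟨(u n) Ω, hud n⟩) atTop (nhds (D ⟨x, hx⟩)))
    (hTomita : ∀ m : H →L[ℂ] H, m ∈ M →
      ∃ h : m Ω ∈ D.domain, J (D ⟨m Ω, h⟩) = (star m) Ω)
    (αt : (H →L[ℂ] H) → (H →L[ℂ] H))
    (hα : ∀ m ∈ M, αt m ∈ M)
    (hαstar : ∀ m ∈ M, αt (star m) = star (αt m))
    (hinv : ∀ m ∈ M, (inner ℂ ((αt m) Ω) Ω : ℂ) = inner ℂ (m Ω) Ω)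
    (S : H →L[ℂ] H)
    (hSdef : ∀ m ∈ M, S (m Ω) = (αt m) Ω)
    (hSJ : ∀ x : H, S (J x) = J (S x)) :
    ∀ x : H, ∀ hx : x ∈ D.domain,
      ∃ h2 : S x ∈ D.domain, D ⟨S x, h2⟩ = S (D ⟨x, hx⟩) := by
  intro x hx
  obtain ⟨u, hu, hud, hconv1, hconv2⟩ := hcore x hx
  -- For each n, S (u n Ω) is in the domain and D (S (u n Ω)) = S (D (u n Ω))
  have key : ∀ n : ℕ, ∃ hn : S ((u n) Ω) ∈ D.domain,
      D ⟨S ((u n) Ω), hn⟩ = S (D ⟨(u n) Ω, hud n⟩) := by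
    intro n
    obtain ⟨hmem, heq⟩ := hTomita (αt (u n)) (hα _ (hu n))
    have hS : S ((u n) Ω) = (αt (u n)) Ω := hSdef _ (hu n)
    refine ⟨hS ▸ hmem, ?_⟩
    -- compute via J
    obtain ⟨hmem', heq'⟩ := hTomita (u n) (hu n)
    have h1 : D ⟨(u n) Ω, hud n⟩ = D ⟨(u n) Ω, hmem'⟩ := rfl
    have h2 : star (u n) Ω = J (D ⟨(u n) Ω, hmem'⟩) := heq'.symm
    have h3 : J (D ⟨S ((u n) Ω), hS ▸ hmem⟩) = J (S (D ⟨(u n) Ω, hud n⟩)) := by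
      have hcast : D ⟨S ((u n) Ω), hS ▸ hmem⟩ = D ⟨(αt (u n)) Ω, hmem⟩ := by
        congr 1
        exact Subtype.ext hS
      rw [hcast, heq, ← hαstar _ (hu n), ← hSdef _ (star_mem (hu n)), h2, h1, hSJ]
    calc D ⟨S ((u n) Ω), hS ▸ hmem⟩ = J (J (D ⟨S ((u n) Ω), hS ▸ hmem⟩)) := (hJinv _).symm
      _ = J (J (S (D ⟨(u n) Ω, hud n⟩))) := by rw [h3]
      _ = S (D ⟨(u n) Ω, hud n⟩) := hJinv _
  choose hdom heq using key
  -- the pair (S x, S (D x)) is a limit of graph points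
  have hgraph : (S x, S (D ⟨x, hx⟩)) ∈ D.graph := by
    have htend : Tendsto (fun n => ((S ((u n) Ω) : H), D ⟨S ((u n) Ω), hdom n⟩))
        atTop (nhds (S x, S (D ⟨x, hx⟩))) := by
      refine Tendsto.prodMk_nhds ?_ ?_
      · exact (S.continuous.tendsto x).comp hconv1
      · simp_rw [heq]
        exact (S.continuous.tendsto _).comp hconv2
    exact hDclosed.mem_of_tendsto htend
      (Eventually.of_forall fun n => D.mem_graph ⟨S ((u n) Ω), hdom n⟩)
  rw [LinearPMap.mem_graph_iff] at hgraph
  obtain ⟨⟨y, hy⟩, h1, h2⟩ := hgraph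
  simp only at h1 h2
  refine ⟨h1 ▸ hy, ?_⟩
  rw [← h2]
  congr 1
  exact Subtype.ext h1.symm
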